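/- Let H₀ and V be Hermitian d×d complex matrices and n ≥ 1, g > 0, w > 0 reals. Assume: (i) whenever u and v are eigenvectors of H₀ with eigenvalues λ_u, λ_v satisfying |λ_u − λ_v| > w, one has ⟨u, V v⟩ = 0 (V only connects H₀-eigenstates with nearby energies); (ii) the operator norm of V satisfies ‖V‖ ≤ g·n. Let ψ be a unit eigenvector of H₀ + V with eigenvalue E ≤ ε₁·n, let ε₂ > ε₁ + 4g, and let Q_> be the orthogonal projector onto the span of the eigenvectors of H₀ with eigenvalue ≥ ε₂·n. Then for every real ΔE > w and every natural number q* ≥ 1 such that ((ε₂ + ε₁)/2 + 2g)·n + q*·ΔE ≤ ε₂·n, the tail bound ‖Q_> ψ‖ ≤ (2g/(ε₂ − ε₁))^{q*} holds. -/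

import Mathlib

open Matrix
open scoped Matrix.Norms.L2Operator

private lemma dot_sum' {d : ℕ} {ι : Type*} (u : Fin d → ℂ) (s : Finset ι) (f : ι → Fin d → ℂ) :
    u ⬝ᵥ (∑ j ∈ s, f j) = ∑ j ∈ s, u ⬝ᵥ f j := by
  simp only [dotProduct, Finset.sum_apply, Finset.mul_sum]
  exact Finset.sum_comm

private lemma sum_dot' {d : ℕ} {ι : Type*} (u : Fin d → ℂ) (s : Finset ι) (f : ι → Fin d → ℂ) :
    (∑ j ∈ s, f j) ⬝ᵥ u = ∑ j ∈ s, f j ⬝ᵥ u := by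
  simp only [dotProduct, Finset.sum_apply, Finset.sum_mul]
  exact Finset.sum_comm

private lemma mulVec_sum' {d : ℕ} {ι : Type*} (V : Matrix (Fin d) (Fin d) ℂ) (s : Finset ι)
    (f : ι → Fin d → ℂ) : V *ᵥ (∑ j ∈ s, f j) = ∑ j ∈ s, V *ᵥ f j := by
  funext i
  rw [show (V *ᵥ ∑ j ∈ s, f j) i = (fun j => V i j) ⬝ᵥ (∑ j ∈ s, f j) from rfl, dot_sum']
  simp only [Finset.sum_apply]
  rfl

private lemma tail_iterate (S : ℝ → ℝ) (E n g w ΔE ε₁ ε₂ : ℝ)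
    (hn : 1 ≤ n) (hg : 0 < g) (hw : 0 < w) (hΔE : w < ΔE) (hε : 0 < ε₂ - ε₁)
    (hE : E ≤ ε₁ * n) (hgap : ε₁ + 4 * g < ε₂)
    (key3 : ∀ t, E < t → S t ≤ (g * n / (t - E)) ^ 2 * S (t - w))
    (hmono : ∀ s s', s ≤ s' → S s' ≤ S s)
    (hS0 : ∀ t, 0 ≤ S t) (hS1 : ∀ t, S t ≤ 1) :
    ∀ j : ℕ, S (((ε₂ + ε₁) / 2 + 2 * g) * n + j * ΔE) ≤ (2 * g / (ε₂ - ε₁)) ^ (2 * j) := by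
  set r := 2 * g / (ε₂ - ε₁) with hr
  set t₀ := ((ε₂ + ε₁) / 2 + 2 * g) * n with ht₀
  have hn0 : 0 < n := by linarith
  have ht₀E : (ε₂ - ε₁) / 2 * n + E ≤ t₀ := by
    have h1 : (ε₂ - ε₁) / 2 * n + ε₁ * n + 2 * g * n = t₀ := by rw [ht₀]; ring
    nlinarith
  have hδ : 0 < ΔE := lt_trans hw hΔE
  intro j
  induction j with
  | zero => simpa using hS1 t₀
  | succ j ih =>
    have hjn : (0:ℝ) ≤ (j:ℝ) := j.cast_nonneg
    have hp1 : (0:ℝ) < (ε₂ - ε₁) / 2 * n := by positivity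
    have hp2 : (0:ℝ) ≤ (j:ℝ) * ΔE := mul_nonneg hjn hδ.le
    have htE : E < t₀ + ((j:ℕ)+1 : ℕ) * ΔE := by
      push_cast
      have h2 : ((j:ℝ) + 1) * ΔE = (j:ℝ) * ΔE + ΔE := by ring
      linarith
    have h3 := key3 _ htE
    have h4 : S (t₀ + ((j:ℕ)+1 : ℕ) * ΔE - w) ≤ S (t₀ + j * ΔE) := by
      apply hmono
      push_cast
      have h2 : ((j:ℝ) + 1) * ΔE = (j:ℝ) * ΔE + ΔE := by ring
      linarith
    have htE' : (0:ℝ) < t₀ + ((j:ℕ)+1 : ℕ) * ΔE - E := sub_pos.mpr htE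
    have h5 : g * n / (t₀ + ((j:ℕ)+1 : ℕ) * ΔE - E) ≤ r := by
      rw [hr, div_le_div_iff₀ htE' (by linarith)]
      have hq : g * ((ε₂ - ε₁) / 2 * n + E) ≤ g * t₀ := mul_le_mul_of_nonneg_left ht₀E hg.le
      have hp3 : (0:ℝ) ≤ g * (((j:ℝ) + 1) * ΔE) := by positivity
      push_cast
      nlinarith [hq, hp3]
    have h6 : (0:ℝ) ≤ g * n / (t₀ + ((j:ℕ)+1 : ℕ) * ΔE - E) := by positivity
    calc S (t₀ + ((j:ℕ)+1 : ℕ) * ΔE)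
        ≤ (g * n / (t₀ + ((j:ℕ)+1 : ℕ) * ΔE - E)) ^ 2
            * S (t₀ + ((j:ℕ)+1 : ℕ) * ΔE - w) := h3
      _ ≤ r ^ 2 * r ^ (2 * j) := by
          refine mul_le_mul (pow_le_pow_left₀ h6 h5 2) (le_trans h4 ih) (hS0 _) ?_
          positivity
      _ = r ^ (2 * (j + 1)) := by rw [← pow_add]; ring_nf

theorem eigenstate_tail_bound {d : ℕ}
    (H₀ V : Matrix (Fin d) (Fin d) ℂ)
    (hH₀ : H₀.IsHermitian) (hV : V.IsHermitian)
    (n g w : ℝ) (hn : 1 ≤ n) (hg : 0 < g) (hw : 0 < w)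
    (hconnect : ∀ (u v : Fin d → ℂ) (lu lv : ℝ),
      H₀.mulVec u = (lu : ℂ) • u → H₀.mulVec v = (lv : ℂ) • v → w < |lu - lv| →
        star u ⬝ᵥ V.mulVec v = 0)
    (hVnorm : ‖V‖ ≤ g * n)
    (ε₁ ε₂ E : ℝ) (hε₂ : ε₁ + 4 * g < ε₂)
    (ψ : Fin d → ℂ) (hψ : star ψ ⬝ᵥ ψ = 1)
    (hψeig : (H₀ + V).mulVec ψ = (E : ℂ) • ψ) (hE : E ≤ ε₁ * n)
    (Q : Matrix (Fin d) (Fin d) ℂ)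
    (hQ_herm : Qᴴ = Q) (hQ_idem : Q * Q = Q)
    (hQ_range : LinearMap.range Q.mulVecLin =
      Submodule.span ℂ {v : Fin d → ℂ | ∃ μ : ℝ, ε₂ * n ≤ μ ∧ H₀.mulVec v = (μ : ℂ) • v})
    (ΔE : ℝ) (hΔE : w < ΔE) (qstar : ℕ) (hqstar : 1 ≤ qstar)
    (hfit : ((ε₂ + ε₁) / 2 + 2 * g) * n + qstar * ΔE ≤ ε₂ * n) :
    Real.sqrt ((star (Q.mulVec ψ) ⬝ᵥ Q.mulVec ψ).re)
      ≤ (2 * g / (ε₂ - ε₁)) ^ qstar := by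
  classical
  set B := hH₀.eigenvectorBasis with hB
  set lam := hH₀.eigenvalues with hlam
  set EN : (Fin d → ℂ) → ℝ :=
    fun x => ‖((WithLp.equiv 2 _).symm x : EuclideanSpace ℂ (Fin d))‖ with hEN
  set co : (Fin d → ℂ) → Fin d → ℂ := fun x i => star ⇑(B i) ⬝ᵥ x with hcodef
  set F : ℝ → Finset (Fin d) := fun s => Finset.univ.filter (fun j => s ≤ lam j) with hFdef
  set pr : ℝ → (Fin d → ℂ) → (Fin d → ℂ) :=
    fun s x => ∑ j ∈ F s, co x j • ⇑(B j) with hprdef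
  set S : ℝ → ℝ := fun t => ∑ i ∈ F t, ‖co ψ i‖ ^ 2 with hSdef
  have hε : 0 < ε₂ - ε₁ := by linarith
  -- coordinates are basis representation
  have hco : ∀ (x : Fin d → ℂ) i, (B.repr ((WithLp.equiv 2 _).symm x)) i = co x i := by
    intro x i
    rw [B.repr_apply_apply]
    rw [EuclideanSpace.inner_eq_star_dotProduct]; exact dotProduct_comm _ _
  -- completeness
  have hcomp : ∀ x : Fin d → ℂ, ∑ j, co x j • ⇑(B j) = x := by
    intro x
    simp_rw [← hco]
    have h := congrArg WithLp.ofLp (B.sum_repr ((WithLp.equiv 2 _).symm x))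
    rw [WithLp.ofLp_sum] at h; simp only [WithLp.ofLp_smul] at h; exact h
  -- Parseval
  have hpars : ∀ x : Fin d → ℂ, ∑ i, ‖co x i‖ ^ 2 = EN x ^ 2 := by
    intro x
    simp_rw [← hco]
    have hEx : EN x = ‖B.repr ((WithLp.equiv 2 _).symm x)‖ := (B.repr.norm_map _).symm
    rw [hEx, EuclideanSpace.norm_eq, Real.sq_sqrt (by positivity)]
  -- eigen equation for H₀ basis vectors (ℂ-scalar form)
  have heig : ∀ i, H₀ *ᵥ ⇑(B i) = ((lam i : ℂ)) • ⇑(B i) := by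
    intro i
    rw [hB, hlam, hH₀.mulVec_eigenvectorBasis i]
    funext j
    simp [Complex.real_smul]
  -- the Hermitian flip
  have hflip : ∀ (A : Matrix (Fin d) (Fin d) ℂ), Aᴴ = A → ∀ (u v : Fin d → ℂ),
      star u ⬝ᵥ (A *ᵥ v) = star (A *ᵥ u) ⬝ᵥ v := by
    intro A hA u v
    rw [Matrix.star_mulVec, hA, ← Matrix.dotProduct_mulVec]
  -- orthonormality in dot-product form
  have horth : ∀ i j, star ⇑(B i) ⬝ᵥ ⇑(B j) = if i = j then 1 else 0 := by
    intro i j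
    have := orthonormal_iff_ite.mp B.orthonormal i j
    rw [← this]
    rw [EuclideanSpace.inner_eq_star_dotProduct]; exact dotProduct_comm _ _
  have hEN0 : ∀ x : Fin d → ℂ, 0 ≤ EN x := fun x => norm_nonneg _
  -- eigen equation in coordinates
  have hcoH : ∀ (x : Fin d → ℂ) i, co (H₀ *ᵥ x) i = (lam i : ℂ) * co x i := by
    intro x i
    show star ⇑(B i) ⬝ᵥ (H₀ *ᵥ x) = _
    rw [hflip H₀ hH₀.eq, heig i, star_smul, smul_dotProduct, Complex.star_def,
      Complex.conj_ofReal, smul_eq_mul]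
  have key1 : ∀ i, ((E : ℂ) - (lam i : ℂ)) * co ψ i = co (V *ᵥ ψ) i := by
    intro i
    have e0 : co ((H₀ + V) *ᵥ ψ) i = co ((E : ℂ) • ψ) i := by rw [hψeig]
    have e1 : co ((H₀ + V) *ᵥ ψ) i = (lam i : ℂ) * co ψ i + co (V *ᵥ ψ) i := by
      have ha : co ((H₀ + V) *ᵥ ψ) i = co (H₀ *ᵥ ψ) i + co (V *ᵥ ψ) i := by
        show star ⇑(B i) ⬝ᵥ ((H₀ + V) *ᵥ ψ)
          = star ⇑(B i) ⬝ᵥ (H₀ *ᵥ ψ) + star ⇑(B i) ⬝ᵥ (V *ᵥ ψ)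
        rw [Matrix.add_mulVec, dotProduct_add]
      rw [ha, hcoH]
    have e2 : co ((E : ℂ) • ψ) i = (E : ℂ) * co ψ i := by
      show star ⇑(B i) ⬝ᵥ ((E : ℂ) • ψ) = _
      rw [dotProduct_smul, smul_eq_mul]
    linear_combination e1 - e0 - e2
  -- band structure
  have hexp : ∀ (i : Fin d) (G : Finset (Fin d)),
      co (V *ᵥ (∑ j ∈ G, co ψ j • ⇑(B j))) i
        = ∑ j ∈ G, co ψ j * (star ⇑(B i) ⬝ᵥ (V *ᵥ ⇑(B j))) := by
    intro i G
    show star ⇑(B i) ⬝ᵥ (V *ᵥ ∑ j ∈ G, co ψ j • ⇑(B j)) = _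
    rw [mulVec_sum', dot_sum']
    refine Finset.sum_congr rfl fun j _ => ?_
    rw [Matrix.mulVec_smul, dotProduct_smul, smul_eq_mul]
  have key2 : ∀ t (i : Fin d), t ≤ lam i →
      co (V *ᵥ ψ) i = co (V *ᵥ pr (t - w) ψ) i := by
    intro t i hti
    have hL : co (V *ᵥ ψ) i = ∑ j, co ψ j * (star ⇑(B i) ⬝ᵥ (V *ᵥ ⇑(B j))) := by
      conv_lhs => rw [← hcomp ψ]
      exact hexp i Finset.univ
    have hR : co (V *ᵥ pr (t - w) ψ) i
        = ∑ j ∈ F (t - w), co ψ j * (star ⇑(B i) ⬝ᵥ (V *ᵥ ⇑(B j))) := hexp i (F (t - w))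
    rw [hL, hR]
    refine (Finset.sum_subset (Finset.subset_univ _) ?_).symm
    intro j _ hj
    have hjl : lam j < t - w := by
      simp only [hFdef, Finset.mem_filter, Finset.mem_univ, true_and, not_le] at hj
      exact hj
    have h0 : star ⇑(B i) ⬝ᵥ (V *ᵥ ⇑(B j)) = 0 := by
      refine hconnect _ _ (lam i) (lam j) (heig i) (heig j) ?_
      have : w < lam i - lam j := by linarith
      exact lt_of_lt_of_le this (le_abs_self _)
    rw [h0, mul_zero]
  -- coordinates of the projected vector
  have hcopr : ∀ s (x : Fin d → ℂ) i, co (pr s x) i = if i ∈ F s then co x i else 0 := by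
    intro s x i
    show star ⇑(B i) ⬝ᵥ (∑ j ∈ F s, co x j • ⇑(B j)) = _
    rw [dot_sum']
    simp_rw [dotProduct_smul, horth, smul_eq_mul]
    simp [mul_ite, Finset.sum_ite_eq]
  have hprnorm : ∀ s (x : Fin d → ℂ), EN (pr s x) ^ 2 = ∑ j ∈ F s, ‖co x j‖ ^ 2 := by
    intro s x
    rw [← hpars (pr s x)]
    calc ∑ i, ‖co (pr s x) i‖ ^ 2
        = ∑ i, if i ∈ F s then ‖co x i‖ ^ 2 else 0 := by
          refine Finset.sum_congr rfl fun i _ => ?_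
          rw [hcopr]
          split <;> simp
      _ = ∑ j ∈ F s, ‖co x j‖ ^ 2 := by rw [Finset.sum_ite_mem, Finset.univ_inter]
  have hS0 : ∀ t, 0 ≤ S t := by
    intro t
    refine Finset.sum_nonneg fun i _ => by positivity
  have hmono : ∀ s s', s ≤ s' → S s' ≤ S s := by
    intro s s' hss
    refine Finset.sum_le_sum_of_subset_of_nonneg ?_ fun i _ _ => by positivity
    intro j hj
    simp only [hFdef, Finset.mem_filter, Finset.mem_univ, true_and] at hj ⊢
    linarith
  have hψnorm : EN ψ ^ 2 = 1 := by
    have h1 := inner_self_eq_norm_sq_to_K (𝕜 := ℂ)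
      ((WithLp.equiv 2 _).symm ψ : EuclideanSpace ℂ (Fin d))
    have h2 : (inner ℂ ((WithLp.equiv 2 _).symm ψ) ((WithLp.equiv 2 _).symm ψ) : ℂ)
        = star ψ ⬝ᵥ ψ := dotProduct_comm _ _
    rw [h2, hψ] at h1
    have h3 : ((EN ψ ^ 2 : ℝ) : ℂ) = 1 := by
      rw [Complex.ofReal_pow]
      exact h1.symm
    exact_mod_cast h3
  have hS1 : ∀ t, S t ≤ 1 := by
    intro t
    calc S t ≤ ∑ i, ‖co ψ i‖ ^ 2 :=
          Finset.sum_le_sum_of_subset_of_nonneg (Finset.subset_univ _)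
            (fun i _ _ => by positivity)
      _ = EN ψ ^ 2 := hpars ψ
      _ = 1 := hψnorm
  have key3 : ∀ t, E < t → S t ≤ (g * n / (t - E)) ^ 2 * S (t - w) := by
    intro t ht
    have htE : 0 < t - E := by linarith
    have hterm : ∀ i ∈ F t, ‖co ψ i‖ ^ 2 ≤ ‖co (V *ᵥ pr (t - w) ψ) i‖ ^ 2 / (t - E) ^ 2 := by
      intro i hi
      have hti : t ≤ lam i := by
        simpa only [hFdef, Finset.mem_filter, Finset.mem_univ, true_and] using hi
      have h1 : ((E : ℂ) - (lam i : ℂ)) * co ψ i = co (V *ᵥ pr (t - w) ψ) i := by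
        rw [← key2 t i hti]; exact key1 i
      have h2 : ‖co (V *ᵥ pr (t - w) ψ) i‖ = (lam i - E) * ‖co ψ i‖ := by
        rw [← h1, norm_mul]
        congr 1
        rw [show (E : ℂ) - (lam i : ℂ) = ((E - lam i : ℝ) : ℂ) by push_cast; ring]
        rw [Complex.norm_real, Real.norm_eq_abs, abs_sub_comm, abs_of_nonneg (by linarith)]
      rw [le_div_iff₀ (by positivity), h2, mul_pow]
      have hnn : 0 ≤ ‖co ψ i‖ ^ 2 := by positivity
      have h4 : (t - E) ^ 2 ≤ (lam i - E) ^ 2 := by nlinarith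
      nlinarith [mul_le_mul_of_nonneg_left h4 hnn]
    calc S t ≤ ∑ i ∈ F t, ‖co (V *ᵥ pr (t - w) ψ) i‖ ^ 2 / (t - E) ^ 2 :=
          Finset.sum_le_sum hterm
      _ = (∑ i ∈ F t, ‖co (V *ᵥ pr (t - w) ψ) i‖ ^ 2) / (t - E) ^ 2 := by
          rw [Finset.sum_div]
      _ ≤ (∑ i, ‖co (V *ᵥ pr (t - w) ψ) i‖ ^ 2) / (t - E) ^ 2 := by
          refine div_le_div_of_nonneg_right ?_ (by positivity) |>.trans_eq rfl
          exact Finset.sum_le_sum_of_subset_of_nonneg (Finset.subset_univ _)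
            (fun i _ _ => by positivity)
      _ = EN (V *ᵥ pr (t - w) ψ) ^ 2 / (t - E) ^ 2 := by rw [hpars]
      _ ≤ (g * n * EN (pr (t - w) ψ)) ^ 2 / (t - E) ^ 2 := by
          have hb : EN (V *ᵥ pr (t - w) ψ) ≤ g * n * EN (pr (t - w) ψ) := by
            have hVφ : EN (V *ᵥ pr (t - w) ψ) ≤ ‖V‖ * EN (pr (t - w) ψ) :=
              V.l2_opNorm_mulVec ((WithLp.equiv 2 _).symm (pr (t - w) ψ))
            exact le_trans hVφ (mul_le_mul_of_nonneg_right hVnorm (hEN0 _))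
          exact div_le_div_of_nonneg_right (pow_le_pow_left₀ (hEN0 _) hb 2) (by positivity)
            |>.trans_eq rfl
      _ = (g * n) ^ 2 * (EN (pr (t - w) ψ)) ^ 2 / (t - E) ^ 2 := by rw [mul_pow]
      _ = (g * n) ^ 2 / (t - E) ^ 2 * (EN (pr (t - w) ψ)) ^ 2 := by ring
      _ = (g * n / (t - E)) ^ 2 * (EN (pr (t - w) ψ)) ^ 2 := by rw [div_pow]
      _ = (g * n / (t - E)) ^ 2 * S (t - w) := by rw [hprnorm]
  -- projector comparison
  have hprlin_add : ∀ s (x y : Fin d → ℂ), pr s (x + y) = pr s x + pr s y := by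
    intro s x y
    show ∑ j ∈ F s, (star ⇑(B j) ⬝ᵥ (x + y)) • ⇑(B j) = _
    rw [← Finset.sum_add_distrib]
    refine Finset.sum_congr rfl fun j _ => ?_
    rw [dotProduct_add, add_smul]
  have hprsmul : ∀ s (a : ℂ) (x : Fin d → ℂ), pr s (a • x) = a • pr s x := by
    intro s a x
    show ∑ j ∈ F s, (star ⇑(B j) ⬝ᵥ (a • x)) • ⇑(B j) = a • ∑ j ∈ F s, (star ⇑(B j) ⬝ᵥ x) • ⇑(B j)
    rw [Finset.smul_sum]
    refine Finset.sum_congr rfl fun j _ => ?_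
    rw [dotProduct_smul, smul_smul, smul_eq_mul]
  have hpr0 : pr (ε₂ * n) 0 = 0 := by
    show ∑ j ∈ F (ε₂ * n), (star ⇑(B j) ⬝ᵥ (0 : Fin d → ℂ)) • ⇑(B j) = 0
    simp
  have hfix : ∀ x ∈ Submodule.span ℂ
      {v : Fin d → ℂ | ∃ μ : ℝ, ε₂ * n ≤ μ ∧ H₀ *ᵥ v = (μ : ℂ) • v},
      pr (ε₂ * n) x = x := by
    intro x hx
    induction hx using Submodule.span_induction with
    | mem v hv =>
      obtain ⟨μ, hμ, hveq⟩ := hv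
      have hvco : ∀ i, i ∉ F (ε₂ * n) → co v i = 0 := by
        intro i hi
        have hli : lam i < ε₂ * n := by
          simpa only [hFdef, Finset.mem_filter, Finset.mem_univ, true_and, not_le] using hi
        have e1 : co (H₀ *ᵥ v) i = (lam i : ℂ) * co v i := hcoH v i
        have e2 : co (H₀ *ᵥ v) i = (μ : ℂ) * co v i := by
          show star ⇑(B i) ⬝ᵥ (H₀ *ᵥ v) = _
          rw [hveq, dotProduct_smul, smul_eq_mul]
        have e3 : ((lam i : ℂ) - (μ : ℂ)) * co v i = 0 := by linear_combination e2 - e1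
        have hne : ((lam i : ℂ) - (μ : ℂ)) ≠ 0 := by
          rw [sub_ne_zero]
          exact_mod_cast ne_of_lt (lt_of_lt_of_le hli hμ)
        exact (mul_eq_zero.mp e3).resolve_left hne
      calc pr (ε₂ * n) v = ∑ j, co v j • ⇑(B j) := by
            refine Finset.sum_subset (Finset.subset_univ _) ?_
            intro j _ hj
            rw [hvco j hj, zero_smul]
        _ = v := hcomp v
    | zero => exact hpr0
    | add x y hxm hym ihx ihy => rw [hprlin_add, ihx, ihy]
    | smul a x hxm ih => rw [hprsmul, ih]
  have hQfix : pr (ε₂ * n) (Q *ᵥ ψ) = Q *ᵥ ψ := by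
    refine hfix _ ?_
    rw [← hQ_range]
    exact LinearMap.mem_range.mpr ⟨ψ, by simp⟩
  -- self-adjointness of pr
  have hsa : ∀ s (x y : Fin d → ℂ), star (pr s x) ⬝ᵥ y = star x ⬝ᵥ pr s y := by
    intro s x y
    have hLHS : star (pr s x) ⬝ᵥ y = ∑ j ∈ F s, star (co x j) * co y j := by
      show star (∑ j ∈ F s, co x j • ⇑(B j)) ⬝ᵥ y = _
      rw [star_sum, sum_dot']
      refine Finset.sum_congr rfl fun j _ => ?_
      rw [star_smul, smul_dotProduct, smul_eq_mul]
    have hRHS : star x ⬝ᵥ pr s y = ∑ j ∈ F s, co y j * (star x ⬝ᵥ ⇑(B j)) := by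
      show star x ⬝ᵥ (∑ j ∈ F s, co y j • ⇑(B j)) = _
      rw [dot_sum']
      exact Finset.sum_congr rfl fun j _ => by rw [dotProduct_smul, smul_eq_mul]
    rw [hLHS, hRHS]
    refine Finset.sum_congr rfl fun j _ => ?_
    have hst : star x ⬝ᵥ ⇑(B j) = star (star ⇑(B j) ⬝ᵥ x) := by
      rw [Matrix.star_dotProduct]
    rw [hst]
    have : star ⇑(B j) ⬝ᵥ x = co x j := rfl
    rw [this, mul_comm]
  -- assemble the final bound
  have hQy : Q *ᵥ (Q *ᵥ ψ) = Q *ᵥ ψ := by rw [Matrix.mulVec_mulVec, hQ_idem]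
  have hinner : star (Q *ᵥ ψ) ⬝ᵥ (Q *ᵥ ψ) = (((EN (Q *ᵥ ψ)) : ℝ) : ℂ) ^ 2 :=
    (dotProduct_comm _ _).trans (inner_self_eq_norm_sq_to_K (𝕜 := ℂ) ((WithLp.equiv 2 _).symm (Q *ᵥ ψ)))
  have hre : (star (Q.mulVec ψ) ⬝ᵥ Q.mulVec ψ).re = EN (Q *ᵥ ψ) ^ 2 := by
    rw [show star (Q.mulVec ψ) ⬝ᵥ Q.mulVec ψ = ((EN (Q *ᵥ ψ) ^ 2 : ℝ) : ℂ) by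
      rw [hinner]; push_cast; ring]
    exact Complex.ofReal_re _
  rw [hre, Real.sqrt_sq (hEN0 _)]
  -- Cauchy-Schwarz step
  have hcs : EN (Q *ᵥ ψ) ^ 2 ≤ EN (pr (ε₂ * n) ψ) * EN (Q *ᵥ ψ) := by
    have e1 : star ψ ⬝ᵥ (Q *ᵥ (Q *ᵥ ψ)) = star (Q *ᵥ ψ) ⬝ᵥ (Q *ᵥ ψ) := hflip Q hQ_herm ψ _
    rw [hQy] at e1
    have e2 : star ψ ⬝ᵥ (Q *ᵥ ψ) = star (pr (ε₂ * n) ψ) ⬝ᵥ (Q *ᵥ ψ) := by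
      conv_lhs => rw [← hQfix]
      exact (hsa (ε₂ * n) ψ (Q *ᵥ ψ)).symm
    have e3 : ‖star (pr (ε₂ * n) ψ) ⬝ᵥ (Q *ᵥ ψ)‖ ≤ EN (pr (ε₂ * n) ψ) * EN (Q *ᵥ ψ) :=
      by have := norm_inner_le_norm (𝕜 := ℂ) ((WithLp.equiv 2 _).symm (pr (ε₂ * n) ψ))
           ((WithLp.equiv 2 _).symm (Q *ᵥ ψ))
         rw [EuclideanSpace.inner_eq_star_dotProduct, dotProduct_comm] at this; exact this
    calc EN (Q *ᵥ ψ) ^ 2 = (star (Q *ᵥ ψ) ⬝ᵥ (Q *ᵥ ψ)).re := hre.symm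
      _ = (star (pr (ε₂ * n) ψ) ⬝ᵥ (Q *ᵥ ψ)).re := by rw [← e1, e2]
      _ ≤ ‖star (pr (ε₂ * n) ψ) ⬝ᵥ (Q *ᵥ ψ)‖ := by
          exact Complex.re_le_norm _
      _ ≤ _ := e3
  have hQle : EN (Q *ᵥ ψ) ≤ EN (pr (ε₂ * n) ψ) := by
    rcases eq_or_lt_of_le (hEN0 (Q *ᵥ ψ)) with h | h
    · rw [← h]; exact hEN0 _
    · have h2 : EN (Q *ᵥ ψ) * EN (Q *ᵥ ψ) ≤ EN (pr (ε₂ * n) ψ) * EN (Q *ᵥ ψ) := by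
        rw [← sq]; exact hcs
      exact le_of_mul_le_mul_right h2 h
  have hprS : EN (pr (ε₂ * n) ψ) = Real.sqrt (S (ε₂ * n)) := by
    have h := hprnorm (ε₂ * n) ψ
    rw [show (∑ j ∈ F (ε₂ * n), ‖co ψ j‖ ^ 2) = S (ε₂ * n) from rfl] at h
    rw [← h, Real.sqrt_sq (hEN0 _)]
  clear_value B lam EN co F pr S
  have hstep := tail_iterate S E n g w ΔE ε₁ ε₂ hn hg hw hΔE hε hE hε₂ key3 hmono hS0 hS1
  have hfinS : S (ε₂ * n) ≤ (2 * g / (ε₂ - ε₁)) ^ (2 * qstar) :=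
    le_trans (hmono _ _ hfit) (hstep qstar)
  calc EN (Q *ᵥ ψ) ≤ Real.sqrt (S (ε₂ * n)) := hprS ▸ hQle
    _ ≤ Real.sqrt ((2 * g / (ε₂ - ε₁)) ^ (2 * qstar)) := Real.sqrt_le_sqrt hfinS
    _ = (2 * g / (ε₂ - ε₁)) ^ qstar := by
        rw [show (2 * g / (ε₂ - ε₁)) ^ (2 * qstar) = ((2 * g / (ε₂ - ε₁)) ^ qstar) ^ 2 from
          pow_mul' _ 2 qstar]
        exact Real.sqrt_sq (by positivity)
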